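/- For the historical Carathéodory–Zermelo system ẋ = y + cos γ, ẏ = sin γ, γ̇ = −cos²γ with γ₀ ∈ (−π/2, π/2), the functions γ(t) = arctan(tan γ₀ − t), y(t) = y₀ + 1/cos γ₀ − 1/cos γ(t), and x(t) = ½[ln|cos γ/(1+sin γ)| + tan γ/cos γ]_{γ₀}^{γ(t)} + (y₀ + 1/cos γ₀) t + x₀ define a solution on all of ℝ with initial condition (x₀, y₀, γ₀). -/

import Mathlib

open Real

theorem historical_explicit_solution
    (x₀ y₀ γ₀ : ℝ) (hγ₀ : γ₀ ∈ Set.Ioo (-(π / 2)) (π / 2))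
    (γf yf xf : ℝ → ℝ)
    (hγf : γf = fun t => Real.arctan (Real.tan γ₀ - t))
    (hyf : yf = fun t => y₀ + 1 / Real.cos γ₀ - 1 / Real.cos (γf t))
    (hxf : xf = fun t =>
      (1 / 2) * ((Real.log |Real.cos (γf t) / (1 + Real.sin (γf t))|
                    - Real.log |Real.cos γ₀ / (1 + Real.sin γ₀)|)
                 + (Real.tan (γf t) / Real.cos (γf t) - Real.tan γ₀ / Real.cos γ₀))
        + (y₀ + 1 / Real.cos γ₀) * t + x₀) :
    xf 0 = x₀ ∧ yf 0 = y₀ ∧ γf 0 = γ₀ ∧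
    ∀ t : ℝ,
      HasDerivAt xf (yf t + Real.cos (γf t)) t ∧
      HasDerivAt yf (Real.sin (γf t)) t ∧
      HasDerivAt γf (-(Real.cos (γf t)) ^ 2) t := by
  have hγ0 : γf 0 = γ₀ := by
    rw [hγf]; simp [Real.arctan_tan hγ₀.1 hγ₀.2]
  -- positivity facts along the trajectory
  have hmem : ∀ t, γf t ∈ Set.Ioo (-(π/2)) (π/2) := by
    intro t; rw [hγf]; exact Real.arctan_mem_Ioo _
  have hc : ∀ t, 0 < Real.cos (γf t) := fun t => Real.cos_pos_of_mem_Ioo (hmem t)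
  have hsc : ∀ t, Real.sin (γf t) ^ 2 + Real.cos (γf t) ^ 2 = 1 :=
    fun t => Real.sin_sq_add_cos_sq _
  have hs1 : ∀ t, 0 < 1 + Real.sin (γf t) := by
    intro t
    nlinarith [hc t, hsc t, Real.neg_one_le_sin (γf t)]
  have hc0 : 0 < Real.cos γ₀ := Real.cos_pos_of_mem_Ioo hγ₀
  -- derivative of γf
  have hγ' : ∀ t, HasDerivAt γf (-(Real.cos (γf t)) ^ 2) t := by
    intro t
    have hu : HasDerivAt (fun t : ℝ => Real.tan γ₀ - t) (-1) t := by
      simpa using (hasDerivAt_id t).const_sub (Real.tan γ₀)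
    have h := (Real.hasDerivAt_arctan (Real.tan γ₀ - t)).comp t hu
    rw [hγf]
    refine h.congr_deriv ?_
    simp only [Real.cos_sq_arctan]
    ring
  -- derivative of cos ∘ γf and sin ∘ γf
  have hcos : ∀ t, HasDerivAt (fun t => Real.cos (γf t))
      (Real.sin (γf t) * Real.cos (γf t) ^ 2) t := by
    intro t
    have h := (Real.hasDerivAt_cos (γf t)).comp t (hγ' t)
    refine h.congr_deriv ?_; ring
  have hsin : ∀ t, HasDerivAt (fun t => Real.sin (γf t))
      (-(Real.cos (γf t) ^ 3)) t := by
    intro t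
    have h := (Real.hasDerivAt_sin (γf t)).comp t (hγ' t)
    refine h.congr_deriv ?_; ring
  -- derivative of yf
  have hy' : ∀ t, HasDerivAt yf (Real.sin (γf t)) t := by
    intro t
    have h := ((hcos t).inv (hc t).ne')
    have h2 : HasDerivAt yf
        (0 - -(Real.sin (γf t) * Real.cos (γf t) ^ 2) / Real.cos (γf t) ^ 2) t := by
      rw [hyf]
      simp only [one_div]
      exact (hasDerivAt_const t (y₀ + (Real.cos γ₀)⁻¹)).sub h
    convert h2 using 1
    field_simp [(hc t).ne']
    ring
  -- rewrite xf without absolute values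
  have hxg : xf = fun t =>
      (1 / 2) * (Real.log (Real.cos (γf t)) - Real.log (1 + Real.sin (γf t))
        - Real.log |Real.cos γ₀ / (1 + Real.sin γ₀)|
        + (Real.sin (γf t) / Real.cos (γf t) ^ 2 - Real.tan γ₀ / Real.cos γ₀))
      + (y₀ + 1 / Real.cos γ₀) * t + x₀ := by
    rw [hxf]
    funext t
    have h1 : |Real.cos (γf t) / (1 + Real.sin (γf t))|
        = Real.cos (γf t) / (1 + Real.sin (γf t)) :=
      abs_of_pos (div_pos (hc t) (hs1 t))
    rw [h1, Real.log_div (hc t).ne' (hs1 t).ne', Real.tan_eq_sin_div_cos]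
    have : Real.sin (γf t) / Real.cos (γf t) / Real.cos (γf t)
        = Real.sin (γf t) / Real.cos (γf t) ^ 2 := by
      rw [div_div, ← pow_two]
    rw [this]
  -- derivative of xf
  have hx' : ∀ t, HasDerivAt xf (yf t + Real.cos (γf t)) t := by
    intro t
    set s := Real.sin (γf t) with hsdef
    set c := Real.cos (γf t) with hcdef
    have hct := hc t
    have hst := hs1 t
    have hsct := hsc t
    have h1 : HasDerivAt (fun t => Real.log (Real.cos (γf t))) (s * c) t := by
      have h := (Real.hasDerivAt_log hct.ne').comp t (hcos t)
      refine h.congr_deriv ?_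
      field_simp
      rw [← hsdef, ← hcdef]
      ring
    have h2 : HasDerivAt (fun t => Real.log (1 + Real.sin (γf t)))
        (-(c ^ 3) / (1 + s)) t := by
      have hadd : HasDerivAt (fun t => 1 + Real.sin (γf t)) (-(c ^ 3)) t := by
        simpa using (hsin t).const_add (1:ℝ)
      have h := (Real.hasDerivAt_log hst.ne').comp t hadd
      refine h.congr_deriv ?_
      simp only [← hsdef]; ring
    have h3 : HasDerivAt (fun t => Real.sin (γf t) / Real.cos (γf t) ^ 2)
        (-(c ^ 2 + 2 * s ^ 2) / c) t := by
      have hpow : HasDerivAt (fun t => Real.cos (γf t) ^ 2)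
          (2 * c ^ 1 * (s * c ^ 2)) t := (hcos t).pow 2
      have h := (hsin t).div hpow (by positivity)
      refine h.congr_deriv ?_
      simp only [← hsdef, ← hcdef]
      have hcne : c ≠ 0 := hct.ne'
      rw [div_eq_div_iff (pow_ne_zero 2 (pow_ne_zero 2 hcne)) hcne]
      ring
    have hin : HasDerivAt (fun t =>
        Real.log (Real.cos (γf t)) - Real.log (1 + Real.sin (γf t))
          - Real.log |Real.cos γ₀ / (1 + Real.sin γ₀)|
          + (Real.sin (γf t) / Real.cos (γf t) ^ 2 - Real.tan γ₀ / Real.cos γ₀))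
        (s * c - -(c ^ 3) / (1 + s) + -(c ^ 2 + 2 * s ^ 2) / c) t :=
      ((h1.sub h2).sub_const _).add (h3.sub_const _)
    have hlin : HasDerivAt (fun t : ℝ => (y₀ + 1 / Real.cos γ₀) * t)
        (y₀ + 1 / Real.cos γ₀) t := by
      simpa using (hasDerivAt_id t).const_mul (y₀ + 1 / Real.cos γ₀)
    have htot := ((hin.const_mul (1/2 : ℝ)).add hlin).add_const x₀
    rw [hxg]
    refine htot.congr_deriv ?_
    rw [hyf]
    simp only [← hcdef]
    have hc2 : c ^ 2 = (1 - s) * (1 + s) := by nlinarith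
    rw [← hsdef, ← hcdef] at hsct
    have hcne : c ≠ 0 := hct.ne'
    have hsne : 1 + s ≠ 0 := hst.ne'
    field_simp
    linear_combination (Real.cos γ₀ * (c ^ 2 - 2 * s - 2)) * hsct
  refine ⟨?_, ?_, hγ0, fun t => ⟨hx' t, hy' t, hγ' t⟩⟩
  · rw [hxf]; simp [hγ0]
  · rw [hyf]; simp [hγ0]
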